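/- Every finite symplectic module (A, φ) is isometric to the standard symplectic module B × B* for some finite abelian group B, where the standard form is ((a₁,ψ₁),(a₂,ψ₂)) ↦ ψ₂(a₁) - ψ₁(a₂). -/

import Mathlib

universe u

set_option maxHeartbeats 2000000 in
private theorem symplectic_key (N : ℕ) :
    ∀ (A : Type u) [AddCommGroup A] [Fintype A]
      (φ : A → A → AddCircle (1 : ℚ)),
      Fintype.card A = N →
      (∀ a b c : A, φ (a + b) c = φ a c + φ b c) →
      (∀ a b c : A, φ a (b + c) = φ a b + φ a c) →
      (∀ a : A, φ a a = 0) →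
      (∀ a : A, (∀ b : A, φ a b = 0) → a = 0) →
      ∃ (B : Type u) (_ : AddCommGroup B) (_ : Fintype B),
        ∃ e : A ≃+ B × (B →+ AddCircle (1 : ℚ)),
          ∀ a b : A, φ a b = (e b).2 (e a).1 - (e a).2 (e b).1 := by
  induction N using Nat.strong_induction_on with
  | _ N IH =>
  intro A _ _ φ hcard hL hR halt hnd
  -- basic bilinearity lemmas
  have hΦ : ∀ a : A, ∃ g : A →+ AddCircle (1 : ℚ), ∀ b, g b = φ a b := fun a =>
    ⟨AddMonoidHom.mk' (φ a) (hR a), fun b => rfl⟩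
  choose Φ hΦ using hΦ
  have hR0 : ∀ a : A, φ a 0 = 0 := fun a => by rw [← hΦ]; exact (Φ a).map_zero
  have hRz : ∀ (a : A) (z : ℤ) (b : A), φ a (z • b) = z • φ a b := fun a z b => by
    rw [← hΦ, ← hΦ]; exact (Φ a).map_zsmul z b
  have hRn : ∀ (a : A) (m : ℕ) (b : A), φ a (m • b) = m • φ a b := fun a m b => by
    rw [← hΦ, ← hΦ]; exact (Φ a).map_nsmul m b
  have hRsub : ∀ a b c : A, φ a (b - c) = φ a b - φ a c := fun a b c => by
    rw [← hΦ, ← hΦ, ← hΦ]; exact (Φ a).map_sub b c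
  have hRneg : ∀ a b : A, φ a (-b) = - φ a b := fun a b => by
    rw [← hΦ, ← hΦ]; exact (Φ a).map_neg b
  have hanti : ∀ a b : A, φ a b = - φ b a := by
    intro a b
    have h := halt (a + b)
    rw [hL, hR, hR, halt, halt, zero_add, add_zero] at h
    exact eq_neg_of_add_eq_zero_left h
  have hL0 : ∀ b : A, φ 0 b = 0 := fun b => by rw [hanti, hR0, neg_zero]
  have hLz : ∀ (z : ℤ) (a b : A), φ (z • a) b = z • φ a b := by
    intro z a b
    rw [hanti, hRz, hanti b a, smul_neg, neg_neg]
  have hLn : ∀ (m : ℕ) (a b : A), φ (m • a) b = m • φ a b := by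
    intro m a b
    rw [hanti, hRn, hanti b a, smul_neg, neg_neg]
  have hLsub : ∀ a b c : A, φ (a - b) c = φ a c - φ b c := by
    intro a b c
    rw [hanti, hRsub, hanti a c, hanti b c]
    abel
  have hLneg : ∀ a b : A, φ (-a) b = - φ a b := by
    intro a b
    rw [hanti, hRneg, neg_neg, hanti b a]
  by_cases htriv : ∀ a : A, a = 0
  · -- trivial case
    have hsub : ∀ f : A →+ AddCircle (1 : ℚ), f = 0 := fun f =>
      AddMonoidHom.ext fun a => by rw [htriv a, map_zero]; rfl
    refine ⟨A, ‹_›, ‹_›,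
      { toFun := fun a => (a, 0)
        invFun := fun p => p.1
        left_inv := fun a => rfl
        right_inv := fun p => Prod.ext rfl (hsub p.2).symm
        map_add' := fun a b => by simp }, fun a b => ?_⟩
    rw [htriv a, hL0]
    simp
  push_neg at htriv
  obtain ⟨a₀, ha₀⟩ := htriv
  obtain ⟨x, hx⟩ := AddMonoid.exists_addOrderOf_eq_exponent
    (AddMonoid.ExponentExists.of_finite (G := A))
  set n := AddMonoid.exponent A with hn
  have hnsmul : ∀ a : A, n • a = 0 := fun a => AddMonoid.exponent_nsmul_eq_zero a
  have hn0 : n ≠ 0 := (AddMonoid.ExponentExists.of_finite (G := A)).exponent_ne_zero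
  have hn2 : 2 ≤ n := by
    rcases Nat.lt_or_ge n 2 with h | h
    · interval_cases n
      · exact absurd rfl hn0
      · exact absurd (by simpa using hnsmul a₀) ha₀
    · exact h
  haveI : NeZero n := ⟨hn0⟩
  have hnQ : (n : ℚ) ≠ 0 := Nat.cast_ne_zero.mpr hn0
  -- the standard character ψ : ZMod n →+ Q/Z
  set f : ℤ →+ AddCircle (1 : ℚ) :=
    (QuotientAddGroup.mk' (AddSubgroup.zmultiples (1 : ℚ))).comp
      (AddMonoidHom.mk' (fun z : ℤ => ((z : ℚ) / n)) (fun a b => by push_cast; ring)) with hfdef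
  have hfapp : ∀ z : ℤ, f z = (((z : ℚ) / n : ℚ) : AddCircle (1 : ℚ)) := fun z => by
    rw [hfdef]; rfl
  have hfn : f (n : ℤ) = 0 := by
    rw [hfapp]
    have h1 : ((n : ℤ) : ℚ) / n = 1 := by push_cast; field_simp
    rw [h1]
    exact AddCircle.coe_period (p := (1 : ℚ))
  set ψ : ZMod n →+ AddCircle (1 : ℚ) := ZMod.lift n ⟨f, hfn⟩ with hψdef
  have ψcoe : ∀ z : ℤ, ψ (z : ZMod n) = (((z : ℚ) / n : ℚ) : AddCircle (1 : ℚ)) := fun z => by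
    rw [hψdef, ZMod.lift_coe]
    exact hfapp z
  have hψz : ∀ z : ℤ, ψ (z : ZMod n) = z • ψ 1 := by
    intro z
    conv_lhs => rw [show ((z : ZMod n)) = z • (1 : ZMod n) from (zsmul_one z).symm]
    rw [map_zsmul]
  have ψinj : Function.Injective ψ := by
    rw [injective_iff_map_eq_zero]
    intro s hs
    obtain ⟨z, rfl⟩ := ZMod.intCast_surjective s
    rw [ψcoe, AddCircle.coe_eq_zero_iff] at hs
    obtain ⟨m, hm⟩ := hs
    have hz : (z : ℚ) = m * n := by
      have hm' : (m : ℚ) = (z : ℚ) / n := by simpa using hm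
      field_simp at hm'
      linarith
    have hz2 : (z : ℚ) = (n : ℚ) * m := by linarith
    have hz' : z = (n : ℤ) * m := by exact_mod_cast hz2
    exact (ZMod.intCast_zmod_eq_zero_iff_dvd z n).mpr ⟨m, hz'⟩
  have tors : ∀ h : AddCircle (1 : ℚ), n • h = 0 → ∃ s : ZMod n, ψ s = h := by
    intro h hh
    obtain ⟨q, rfl⟩ := QuotientAddGroup.mk_surjective h
    rw [show ((n : ℕ) • (q : AddCircle (1 : ℚ))) = (((n • q : ℚ)) : AddCircle (1 : ℚ)) from
      (AddCircle.coe_nsmul (1 : ℚ)).symm, AddCircle.coe_eq_zero_iff] at hh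
    obtain ⟨m, hm⟩ := hh
    refine ⟨(m : ZMod n), ?_⟩
    rw [ψcoe]
    have hm' : (m : ℚ) = n * q := by simpa using hm
    have hq : (m : ℚ) / n = q := by rw [hm', mul_div_cancel_left₀ _ hnQ]
    rw [hq]
  -- every value of φ is in the image of ψ
  have hexR : ∀ a b : A, ∃ s : ZMod n, ψ s = φ a b := by
    intro a b
    refine tors _ ?_
    rw [← hRn a n b, hnsmul b, hR0]
  choose c hc using hexR
  -- χ := φ x ⬝ as a character with values in ZMod n
  set χ : A →+ ZMod n := AddMonoidHom.mk' (fun a => c x a)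
    (fun a b => ψinj (by rw [hc, map_add, hc, hc]; exact hR x a b)) with hχdef
  have hχapp : ∀ b : A, χ b = c x b := fun b => by rw [hχdef]; rfl
  have hφxb : ∀ b : A, φ x b = ψ (χ b) := fun b => by rw [hχapp]; exact (hc x b).symm
  have hχsurj : Function.Surjective χ := by
    have hfin : Finite χ.range := inferInstance
    set m := Nat.card χ.range with hm
    have hms : ∀ a : A, m • χ a = 0 := by
      intro a
      have h1 : m • (⟨χ a, ⟨a, rfl⟩⟩ : χ.range) = 0 := card_nsmul_eq_zero'
      have h2 := congrArg (Subtype.val) h1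
      simpa using h2
    have hmx : m • x = 0 := by
      apply hnd
      intro b
      rw [hLn m x b, hφxb b, ← map_nsmul, hms b, map_zero]
    have hdvd : n ∣ m := hx ▸ addOrderOf_dvd_of_nsmul_eq_zero hmx
    have hle : m ≤ n := by
      have := Nat.card_le_card_of_injective (Subtype.val : χ.range → ZMod n) Subtype.val_injective
      rwa [Nat.card_zmod] at this
    have hmpos : 0 < m := Nat.card_pos
    have hmn : m = n := Nat.le_antisymm hle (Nat.le_of_dvd hmpos hdvd)
    have htop : χ.range = ⊤ := by
      apply AddSubgroup.eq_top_of_card_eq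
      rw [← hm, hmn, Nat.card_zmod]
    intro z
    have hz : z ∈ χ.range := htop ▸ AddSubgroup.mem_top z
    exact hz
  obtain ⟨y, hy⟩ := hχsurj 1
  have hxy : φ x y = ψ 1 := by rw [hφxb y, hy]
  -- the generators ιx, ιy : ZMod n →+ A
  have hxn : (zmultiplesHom A x) (n : ℤ) = 0 := by simpa using hnsmul x
  have hyn : (zmultiplesHom A y) (n : ℤ) = 0 := by simpa using hnsmul y
  set ιx : ZMod n →+ A := ZMod.lift n ⟨zmultiplesHom A x, hxn⟩ with hιxdef
  set ιy : ZMod n →+ A := ZMod.lift n ⟨zmultiplesHom A y, hyn⟩ with hιydef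
  have hιxz : ∀ z : ℤ, ιx (z : ZMod n) = z • x := fun z => by
    rw [hιxdef, ZMod.lift_coe]
    rfl
  have hιyz : ∀ z : ℤ, ιy (z : ZMod n) = z • y := fun z => by
    rw [hιydef, ZMod.lift_coe]
    rfl
  -- the perp of the hyperbolic plane
  set W : AddSubgroup A :=
    { carrier := {a | φ a y = 0 ∧ φ x a = 0}
      zero_mem' := ⟨hL0 y, hR0 x⟩
      add_mem' := fun ha hb => ⟨by rw [hL, ha.1, hb.1, add_zero], by rw [hR, ha.2, hb.2, add_zero]⟩
      neg_mem' := fun ha => ⟨by rw [hLneg, ha.1, neg_zero], by rw [hRneg, ha.2, neg_zero]⟩ } with hWdef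
  have hWmem : ∀ a : A, a ∈ W ↔ (φ a y = 0 ∧ φ x a = 0) := fun a => Iff.rfl
  haveI : Fintype W := Fintype.ofFinite W
  -- value lemmas
  have hφ_ιx_y : ∀ s : ZMod n, φ (ιx s) y = ψ s := by
    intro s
    obtain ⟨z, rfl⟩ := ZMod.intCast_surjective s
    rw [hιxz, hLz, hxy, hψz]
  have hφ_ιy_y : ∀ t : ZMod n, φ (ιy t) y = 0 := by
    intro t
    obtain ⟨z, rfl⟩ := ZMod.intCast_surjective t
    rw [hιyz, hLz, halt, smul_zero]
  have hφ_x_ιy : ∀ t : ZMod n, φ x (ιy t) = ψ t := by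
    intro t
    obtain ⟨z, rfl⟩ := ZMod.intCast_surjective t
    rw [hιyz, hRz, hxy, hψz]
  have hφ_x_ιx : ∀ s : ZMod n, φ x (ιx s) = 0 := by
    intro s
    obtain ⟨z, rfl⟩ := ZMod.intCast_surjective s
    rw [hιxz, hRz, halt, smul_zero]
  have hφ_ιx_ιx : ∀ s s' : ZMod n, φ (ιx s) (ιx s') = 0 := by
    intro s s'
    obtain ⟨z, rfl⟩ := ZMod.intCast_surjective s
    rw [hιxz, hLz, hφ_x_ιx, smul_zero]
  have hφ_ιy_ιy : ∀ t t' : ZMod n, φ (ιy t) (ιy t') = 0 := by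
    intro t t'
    obtain ⟨z, rfl⟩ := ZMod.intCast_surjective t
    obtain ⟨z', rfl⟩ := ZMod.intCast_surjective t'
    rw [hιyz, hιyz, hLz, hRz, halt, smul_zero, smul_zero]
  have hφ_ιx_ιy : ∀ s t : ZMod n, φ (ιx s) (ιy t) = ψ (s * t) := by
    intro s t
    obtain ⟨z, rfl⟩ := ZMod.intCast_surjective s
    obtain ⟨z', rfl⟩ := ZMod.intCast_surjective t
    rw [hιxz, hιyz, hLz, hRz, hxy, smul_smul, ← Int.cast_mul, hψz]
  have hφ_ιy_ιx : ∀ t s : ZMod n, φ (ιy t) (ιx s) = - ψ (t * s) := by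
    intro t s
    rw [hanti, hφ_ιx_ιy, mul_comm]
  have hφ_ιx_W : ∀ (s : ZMod n) (w : W), φ (ιx s) (w : A) = 0 := by
    intro s w
    obtain ⟨z, rfl⟩ := ZMod.intCast_surjective s
    rw [hιxz, hLz, ((hWmem _).mp w.2).2, smul_zero]
  have hφ_W_ιx : ∀ (w : W) (s : ZMod n), φ (w : A) (ιx s) = 0 := by
    intro w s
    rw [hanti, hφ_ιx_W, neg_zero]
  have hφ_W_ιy : ∀ (w : W) (t : ZMod n), φ (w : A) (ιy t) = 0 := by
    intro w t
    obtain ⟨z, rfl⟩ := ZMod.intCast_surjective t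
    rw [hιyz, hRz, ((hWmem _).mp w.2).1, smul_zero]
  have hφ_ιy_W : ∀ (t : ZMod n) (w : W), φ (ιy t) (w : A) = 0 := by
    intro t w
    rw [hanti, hφ_W_ιy, neg_zero]
  -- the decomposition homomorphism
  set F : (ZMod n × ZMod n) × W →+ A := AddMonoidHom.mk'
    (fun p => ιx p.1.1 + ιy p.1.2 + (p.2 : A))
    (fun p q => by
      simp only [Prod.fst_add, Prod.snd_add, map_add, AddSubgroup.coe_add]
      abel) with hFdef
  have hFapp : ∀ (s t : ZMod n) (w : W), F ((s, t), w) = ιx s + ιy t + (w : A) :=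
    fun s t w => by rw [hFdef]; rfl
  -- the form on the decomposition
  have hform : ∀ (s t : ZMod n) (w : W) (s' t' : ZMod n) (w' : W),
      φ (ιx s + ιy t + (w : A)) (ιx s' + ιy t' + (w' : A))
        = ψ (s * t') - ψ (t * s') + φ (w : A) (w' : A) := by
    intro s t w s' t' w'
    simp only [hL, hR]
    rw [hφ_ιx_ιx, hφ_ιx_ιy, hφ_ιx_W, hφ_ιy_ιx, hφ_ιy_ιy, hφ_ιy_W, hφ_W_ιx, hφ_W_ιy]
    abel
  -- σ := φ ⬝ y as ZMod n valued character
  set σ : A →+ ZMod n := AddMonoidHom.mk' (fun a => c a y)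
    (fun a b => ψinj (by rw [hc, map_add, hc, hc]; exact hL a b y)) with hσdef
  have hσapp : ∀ a : A, σ a = c a y := fun a => by rw [hσdef]; rfl
  have hφay : ∀ a : A, φ a y = ψ (σ a) := fun a => by rw [hσapp]; exact (hc a y).symm
  have hmemW : ∀ a : A, a - ιx (σ a) - ιy (χ a) ∈ W := by
    intro a
    rw [hWmem]
    constructor
    · rw [hLsub, hLsub, hφ_ιx_y, hφ_ιy_y, hφay, sub_zero, sub_self]
    · rw [hRsub, hRsub, hφ_x_ιx, hφ_x_ιy, hφxb, sub_zero, sub_self]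
  have hFsurj : Function.Surjective F := by
    intro a
    refine ⟨((σ a, χ a), ⟨a - ιx (σ a) - ιy (χ a), hmemW a⟩), ?_⟩
    rw [hFapp]
    show ιx (σ a) + ιy (χ a) + (a - ιx (σ a) - ιy (χ a)) = a
    abel
  have hFinj : Function.Injective F := by
    rw [injective_iff_map_eq_zero]
    rintro ⟨⟨s, t⟩, w⟩ h0
    have hsum : ιx s + ιy t + (w : A) = 0 := by rw [← hFapp s t w]; exact h0
    have hs : s = 0 := by
      apply ψinj
      rw [map_zero]
      have h1 : φ (ιx s + ιy t + (w : A)) y = ψ s := by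
        rw [hL, hL, hφ_ιx_y, hφ_ιy_y, ((hWmem _).mp w.2).1, add_zero, add_zero]
      rw [hsum, hL0] at h1
      exact h1.symm
    have ht : t = 0 := by
      apply ψinj
      rw [map_zero]
      have h1 : φ x (ιx s + ιy t + (w : A)) = ψ t := by
        rw [hR, hR, hφ_x_ιx, hφ_x_ιy, ((hWmem _).mp w.2).2, zero_add, add_zero]
      rw [hsum, hR0] at h1
      exact h1.symm
    have hw : w = 0 := by
      have h1 : (w : A) = 0 := by
        have := hsum
        rw [hs, ht, map_zero, map_zero, zero_add, zero_add] at this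
        exact this
      exact Subtype.ext h1
    simp [Prod.ext_iff, hs, ht, hw]
  set Feq : ((ZMod n × ZMod n) × W) ≃+ A := AddEquiv.ofBijective F ⟨hFinj, hFsurj⟩ with hFeqdef
  have hFeq : ∀ p, Feq p = F p := fun p => by rw [hFeqdef]; rfl
  -- cardinality of W
  have hcW : Fintype.card W < N := by
    have h1 : Fintype.card ((ZMod n × ZMod n) × W) = Fintype.card A :=
      Fintype.card_congr Feq.toEquiv
    rw [Fintype.card_prod, Fintype.card_prod, ZMod.card] at h1
    have hWpos : 0 < Fintype.card W := Fintype.card_pos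
    have h4 : 4 ≤ n * n := by nlinarith
    have h5 : 4 * Fintype.card W ≤ n * n * Fintype.card W := Nat.mul_le_mul_right _ h4
    omega
  -- the restricted form on W is symplectic
  obtain ⟨B, _instB, _finB, eW, heW⟩ :=
    IH (Fintype.card W) hcW W (fun w w' => φ (w : A) (w' : A)) rfl
      (fun a b c => hL (a : A) (b : A) (c : A))
      (fun a b c => hR (a : A) (b : A) (c : A))
      (fun a => halt (a : A))
      (by
        intro w hw
        apply Subtype.ext
        show (w : A) = 0
        apply hnd
        intro b
        obtain ⟨⟨⟨s, t⟩, w'⟩, rfl⟩ := hFsurj b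
        rw [hFapp, hR, hR, hφ_W_ιx, hφ_W_ιy, zero_add, zero_add]
        exact hw w')
  -- the duality for ZMod n
  set Dhom : ZMod n →+ (ZMod n →+ AddCircle (1 : ℚ)) :=
    AddMonoidHom.mk' (fun t => AddMonoidHom.mk' (fun u => ψ (t * u))
        (fun u v => by show ψ (t * (u + v)) = ψ (t * u) + ψ (t * v); rw [mul_add, map_add]))
      (fun t t' => AddMonoidHom.ext fun u => by
        show ψ ((t + t') * u) = ψ (t * u) + ψ (t' * u)
        rw [add_mul, map_add]) with hDdef
  have hDapp : ∀ t u : ZMod n, Dhom t u = ψ (t * u) := fun t u => by rw [hDdef]; rfl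
  have hzext : ∀ (f g : ZMod n →+ AddCircle (1 : ℚ)), f 1 = g 1 → f = g := by
    intro f g h
    ext u
    obtain ⟨z, rfl⟩ := ZMod.intCast_surjective u
    rw [show ((z : ZMod n)) = z • (1 : ZMod n) from (zsmul_one z).symm,
      map_zsmul, map_zsmul, h]
  have hDsurj : ∀ g : ZMod n →+ AddCircle (1 : ℚ), ∃ t, Dhom t = g := by
    intro g
    have hone : n • (1 : ZMod n) = 0 := by
      rw [nsmul_eq_mul, mul_one]
      exact ZMod.natCast_self n
    have h1 : n • g 1 = 0 := by rw [← map_nsmul, hone, map_zero]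
    obtain ⟨t, ht⟩ := tors _ h1
    refine ⟨t, hzext _ _ ?_⟩
    rw [hDapp, mul_one, ht]
  -- the combining equivalence
  have hcoprod_add : ∀ (f₁ f₂ : ZMod n →+ AddCircle (1 : ℚ)) (g₁ g₂ : B →+ AddCircle (1 : ℚ)),
      (f₁ + f₂).coprod (g₁ + g₂) = f₁.coprod g₁ + f₂.coprod g₂ := by
    intro f₁ f₂ g₁ g₂
    ext p
    simp only [AddMonoidHom.coprod_apply, AddMonoidHom.add_apply]
    abel
  set Ghom : (ZMod n × ZMod n) × W →+ (ZMod n × B) × ((ZMod n × B) →+ AddCircle (1 : ℚ)) :=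
    AddMonoidHom.mk'
      (fun p => ((p.1.1, (eW p.2).1), (Dhom p.1.2).coprod ((eW p.2).2)))
      (fun p q => by
        simp only [Prod.fst_add, Prod.snd_add, map_add, Prod.fst_add, Prod.snd_add,
          hcoprod_add, Prod.mk_add_mk]) with hGdef
  have hGapp : ∀ (s t : ZMod n) (w : W),
      Ghom ((s, t), w) = ((s, (eW w).1), (Dhom t).coprod ((eW w).2)) :=
    fun s t w => by rw [hGdef]; rfl
  have hGinj : Function.Injective Ghom := by
    rw [injective_iff_map_eq_zero]
    rintro ⟨⟨s, t⟩, w⟩ h0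
    rw [hGapp] at h0
    have hs : s = 0 := congrArg (fun r => r.1.1) h0
    have hb : (eW w).1 = 0 := congrArg (fun r => r.1.2) h0
    have hcop : (Dhom t).coprod ((eW w).2) = 0 := congrArg (fun r => r.2) h0
    have ht : t = 0 := by
      apply ψinj
      rw [map_zero]
      have h1 := congrArg (fun g => g ((1 : ZMod n), (0 : B))) hcop
      simpa [AddMonoidHom.coprod_apply, hDapp] using h1
    have hw : w = 0 := by
      apply eW.injective
      rw [map_zero]
      refine Prod.ext hb (AddMonoidHom.ext fun b => ?_)
      have h1 := congrArg (fun g => g ((0 : ZMod n), b)) hcop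
      simpa [AddMonoidHom.coprod_apply, hDapp] using h1
    simp [Prod.ext_iff, hs, ht, hw]
  have hGsurj : Function.Surjective Ghom := by
    rintro ⟨⟨s, b⟩, Ψ⟩
    obtain ⟨t, ht⟩ := hDsurj (Ψ.comp (AddMonoidHom.inl (ZMod n) B))
    refine ⟨((s, t), eW.symm (b, Ψ.comp (AddMonoidHom.inr (ZMod n) B))), ?_⟩
    rw [hGapp, eW.apply_symm_apply]
    refine Prod.ext rfl ?_
    show (Dhom t).coprod (Ψ.comp (AddMonoidHom.inr (ZMod n) B)) = Ψ
    rw [ht]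
    ext p
    obtain ⟨u, v⟩ := p
    simp only [AddMonoidHom.coprod_apply, AddMonoidHom.comp_apply,
      AddMonoidHom.inl_apply, AddMonoidHom.inr_apply]
    rw [← map_add]
    congr 1
    simp
  set Geq := AddEquiv.ofBijective Ghom ⟨hGinj, hGsurj⟩ with hGeqdef
  have hGeq : ∀ p, Geq p = Ghom p := fun p => by rw [hGeqdef]; rfl
  refine ⟨ZMod n × B, inferInstance, inferInstance, Feq.symm.trans Geq, ?_⟩
  intro a b
  obtain ⟨p, rfl⟩ := Feq.surjective a
  obtain ⟨q, rfl⟩ := Feq.surjective b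
  obtain ⟨⟨s, t⟩, w⟩ := p
  obtain ⟨⟨s', t'⟩, w'⟩ := q
  have hea : ∀ r, (Feq.symm.trans Geq) (Feq r) = Ghom r := fun r => by
    rw [AddEquiv.trans_apply, AddEquiv.symm_apply_apply, hGeq]
  rw [hea, hea, hFeq, hFeq, hFapp, hFapp, hform, hGapp, hGapp]
  simp only [AddMonoidHom.coprod_apply, hDapp]
  rw [heW w w', mul_comm t' s, mul_comm t s']
  abel

/-- Every finite symplectic module is isometric to a standard one `B × Hom(B, ℚ/ℤ)`. -/
theorem symplectic_classification {A : Type u} [AddCommGroup A] [Fintype A]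
    (φ : A → A → AddCircle (1 : ℚ))
    (hL : ∀ a b c : A, φ (a + b) c = φ a c + φ b c)
    (hR : ∀ a b c : A, φ a (b + c) = φ a b + φ a c)
    (halt : ∀ a : A, φ a a = 0)
    (hnd : ∀ a : A, (∀ b : A, φ a b = 0) → a = 0) :
    ∃ (B : Type u) (_ : AddCommGroup B) (_ : Fintype B),
      ∃ e : A ≃+ B × (B →+ AddCircle (1 : ℚ)),
        ∀ a b : A, φ a b = (e b).2 (e a).1 - (e a).2 (e b).1 := by
  exact symplectic_key (Fintype.card A) A φ rfl hL hR halt hnd
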